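/- Let Γ be a countable (finite or countably infinite) set of subsets of a set A containing a non-trivial member γ with ∅ ≠ γ ⊊ A. Then the set {Pol(Q) : Q ⊆ DD(Γ) finite} of polymorphism clones of finite sets of relations disjunctively definable from Γ has cardinality exactly ℵ₀. -/

import Mathlib

/-- The `n`-ary cross relation defined by the tuple `γ` of unary relations:
`{(x₁,…,xₙ) : x₁ ∈ γ₁ ∨ … ∨ xₙ ∈ γₙ}`. -/
def Cross {A : Type*} {n : ℕ} (γ : Fin n → Set A) : Set (Fin n → A) :=
  {x | ∃ i, x i ∈ γ i}

/-- A finitary relation on `A`: an arity together with a set of tuples of that arity. -/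
abbrev FinRel (A : Type*) := Σ n : ℕ, Set (Fin n → A)

/-- A `k`-ary operation `f` preserves an `n`-ary relation `ρ` if applying `f`
componentwise to any `k` tuples of `ρ` yields a tuple of `ρ`. -/
def Preserves {A : Type*} {k n : ℕ} (f : (Fin k → A) → A) (ρ : Set (Fin n → A)) : Prop :=
  ∀ r : Fin k → Fin n → A, (∀ j, r j ∈ ρ) → (fun i => f fun j => r j i) ∈ ρ

/-- A finitary operation on `A` of positive arity `k + 1`. -/
abbrev Op (A : Type*) := Σ k : ℕ, (Fin (k + 1) → A) → A

/-- The polymorphism clone of a set of finitary relations: all finitary operations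
of positive arity preserving every relation of the set. -/
def Pol {A : Type*} (Q : Set (FinRel A)) : Set (Op A) :=
  {f | ∀ ρ ∈ Q, Preserves f.2 ρ.2}

/-- Relations disjunctively definable from the unary language `Γ`:
crosses `R(γ₁,…,γₙ)` with `n ≥ 1` and all `γᵢ ∈ Γ`. -/
def DD {A : Type*} (Γ : Set (Set A)) : Set (FinRel A) :=
  {ρ | 1 ≤ ρ.1 ∧ ∃ γ : Fin ρ.1 → Set A, (∀ i, γ i ∈ Γ) ∧ ρ.2 = Cross γ}

open scoped Classical

/-- Threshold-2 operation of arity `k+1`: returns `a` if at least two arguments lie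
in `γ`, else `b`. -/
noncomputable def thOp {A : Type*} (a b : A) (γ : Set A) (k : ℕ) : Op A :=
  ⟨k, fun x => if ∃ i j : Fin (k + 1), i ≠ j ∧ x i ∈ γ ∧ x j ∈ γ then a else b⟩

lemma thOp_preserves {A : Type*} {γ : Set A} {a : A} (b : A) (ha : a ∈ γ) (k n : ℕ)
    (hn : n < k + 1) : Preserves (thOp a b γ k).2 (Cross (fun _ : Fin n => γ)) := by
  intro r hr
  choose c hc using hr
  obtain ⟨j₁, j₂, hne, heq⟩ := Fintype.exists_ne_map_eq_of_card_lt (α := Fin (k + 1)) c (by simpa using hn)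
  refine ⟨c j₁, ?_⟩
  have hcond : ∃ i j : Fin (k + 1), i ≠ j ∧ r i (c j₁) ∈ γ ∧ r j (c j₁) ∈ γ :=
    ⟨j₁, j₂, hne, hc j₁, heq.symm ▸ hc j₂⟩
  show (if _ then a else b) ∈ γ
  rw [if_pos hcond]
  exact ha

lemma thOp_not_preserves {A : Type*} {γ : Set A} {a b : A} (ha : a ∈ γ) (hb : b ∉ γ)
    (k n : ℕ) (hn : k + 1 ≤ n) :
    ¬ Preserves (thOp a b γ k).2 (Cross (fun _ : Fin n => γ)) := by
  intro h
  set r : Fin (k + 1) → Fin n → A := fun j i => if (i : ℕ) = (j : ℕ) then a else b with hrdef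
  have hrows : ∀ j, r j ∈ Cross (fun _ : Fin n => γ) := by
    intro j
    exact ⟨⟨(j : ℕ), lt_of_lt_of_le j.isLt hn⟩, by simp [r, ha]⟩
  obtain ⟨i, hi⟩ := h r hrows
  have hcond : ¬ ∃ j₁ j₂ : Fin (k + 1), j₁ ≠ j₂ ∧ r j₁ i ∈ γ ∧ r j₂ i ∈ γ := by
    rintro ⟨j₁, j₂, hne, h1, h2⟩
    have e1 : (i : ℕ) = (j₁ : ℕ) := by
      by_contra hc; rw [hrdef] at h1; simp only [if_neg hc] at h1; exact hb h1
    have e2 : (i : ℕ) = (j₂ : ℕ) := by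
      by_contra hc; rw [hrdef] at h2; simp only [if_neg hc] at h2; exact hb h2
    exact hne (Fin.val_injective (e1.symm.trans e2))
  have : (fun i => (thOp a b γ k).2 fun j => r j i) i = b := by
    show (if _ then a else b) = b
    rw [if_neg hcond]
  rw [this] at hi
  exact hb hi

/-- For a countable unary relational language `Γ` containing a non-trivial member
`∅ ≠ γ ⊊ A`, the set of polymorphism clones of finite sets of relations
disjunctively definable from `Γ` has cardinality exactly `ℵ₀`. -/
theorem mk_pol_finite_eq_aleph0_of_countable_language {A : Type*} (Γ : Set (Set A))
    (hΓ : Γ.Countable) (γ : Set A) (hγΓ : γ ∈ Γ) (hne : γ.Nonempty)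
    (hproper : γ ≠ Set.univ) :
    Cardinal.mk {F : Set (Op A) | ∃ Q, Q ⊆ DD Γ ∧ Q.Finite ∧ F = Pol Q} =
      Cardinal.aleph0 := by
  classical
  obtain ⟨a, ha⟩ := hne
  obtain ⟨b, hb⟩ : ∃ b, b ∉ γ := by
    by_contra h
    push_neg at h
    exact hproper (Set.eq_univ_of_forall h)
  -- the family of cross relations ρ n = R(γ,…,γ) of arity n+1
  set ρ : ℕ → FinRel A := fun n => ⟨n + 1, Cross (fun _ : Fin (n + 1) => γ)⟩ with hρdef
  have hρDD : ∀ n, ρ n ∈ DD Γ := fun n =>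
    ⟨Nat.succ_le_succ (Nat.zero_le n), fun _ => γ, fun _ => hγΓ, rfl⟩
  apply le_antisymm
  · -- upper bound: countability
    have hc : Countable Γ := hΓ.to_subtype
    have hDD : (DD Γ).Countable := by
      have hsub : DD Γ ⊆ Set.range
          (fun p : Σ n : ℕ, (Fin n → Γ) =>
            (⟨p.1, Cross fun i => ((p.2 i : Set A))⟩ : FinRel A)) := by
        rintro ⟨n, R⟩ ⟨-, γ', hγ', hR⟩
        exact ⟨⟨n, fun i => ⟨γ' i, hγ' i⟩⟩, congrArg (Sigma.mk n) hR.symm⟩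
      exact (Set.countable_range _).mono hsub
    have hfin : {Q : Set (FinRel A) | Q.Finite ∧ Q ⊆ DD Γ}.Countable :=
      Set.countable_setOf_finite_subset hDD
    have himg : {F : Set (Op A) | ∃ Q, Q ⊆ DD Γ ∧ Q.Finite ∧ F = Pol Q}.Countable := by
      refine (hfin.image Pol).mono ?_
      rintro F ⟨Q, hQ, hf, rfl⟩
      exact ⟨Q, ⟨hf, hQ⟩, rfl⟩
    have := himg.to_subtype
    exact Cardinal.mk_le_aleph0
  · -- lower bound: infinitely many clones
    rw [Cardinal.aleph0_le_mk_iff]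
    have key : ∀ n m : ℕ, n < m → Pol {ρ n} ≠ Pol {ρ m} := by
      intro n m hnm hEq
      have h1 : thOp a b γ (n + 1) ∈ Pol {ρ n} := by
        intro ρ' hρ'
        rw [Set.mem_singleton_iff] at hρ'
        subst hρ'
        exact thOp_preserves b ha (n + 1) (n + 1) (by omega)
      rw [hEq] at h1
      have h2 := h1 (ρ m) rfl
      exact thOp_not_preserves ha hb (n + 1) (m + 1) (by omega) h2
    have hinj : Function.Injective
        (fun n : ℕ => (⟨Pol {ρ n}, ⟨{ρ n}, Set.singleton_subset_iff.mpr (hρDD n),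
          Set.finite_singleton _, rfl⟩⟩ :
          {F : Set (Op A) | ∃ Q, Q ⊆ DD Γ ∧ Q.Finite ∧ F = Pol Q})) := by
      intro n m h
      by_contra hne'
      rcases lt_or_gt_of_ne hne' with hlt | hlt
      · exact key n m hlt (congrArg Subtype.val h)
      · exact key m n hlt (congrArg Subtype.val h).symm
    exact Infinite.of_injective _ hinj
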